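/- Uniqueness of Abel functions up to an additive constant: if V∘h = V + 1 and U∘h = U + 1 with U, V ∈ S^{>,≻}, then V = U + r₀ for some r₀ ∈ R. -/

import Mathlib

/-- `s` is positive infinite: `s > R`. -/
def PosInf {T : Type*} [Field T] [LinearOrder T] [IsStrictOrderedRing T] (R : Subfield T) (s : T) : Prop :=
  ∀ r ∈ R, r < s

/-- uniqueness of Abel functions up to an additive constant:
if `V∘h = V + 1` and `U∘h = U + 1` in the group `(S^{>,≻}, ∘, x)`, then
`V = U + r₀` for some constant `r₀ ∈ R`.  The centralizer of `x + 1` being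
`x + R` is a hypothesis (previous result). -/
theorem abel_function_unique_up_to_constant (T : Type*) [Field T] [LinearOrder T] [IsStrictOrderedRing T]
    (R : Subfield T) (comp : T → T → T) (x : T)
    (hx : PosInf R x)
    (comp_add : ∀ f g s : T, PosInf R s → comp (f + g) s = comp f s + comp g s)
    (comp_const : ∀ r : T, r ∈ R → ∀ s : T, PosInf R s → comp r s = r)
    (comp_id_left : ∀ s : T, PosInf R s → comp x s = s)
    (comp_id_right : ∀ f : T, comp f x = f)
    (comp_assoc : ∀ f g s : T, PosInf R g → PosInf R s →
      comp (comp f g) s = comp f (comp g s))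
    (comp_posinf : ∀ f s : T, PosInf R f → PosInf R s → PosInf R (comp f s))
    -- the group structure: existence of compositional inverses
    (hinv : ∀ f : T, PosInf R f → ∃ g : T, PosInf R g ∧
      comp f g = x ∧ comp g f = x)
    -- the centralizer of x + 1 equals x + R (previous result)
    (hC : ∀ g : T, PosInf R g → comp g (x + 1) = comp (x + 1) g →
      ∃ r : T, r ∈ R ∧ g = x + r)
    (h U V : T) (hh : PosInf R h) (hhx : x < h)
    (hU : PosInf R U) (hV : PosInf R V)
    (hUabel : comp U h = U + 1) (hVabel : comp V h = V + 1) :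
    ∃ r₀ : T, r₀ ∈ R ∧ V = U + r₀ := by
  obtain ⟨W, hW, hVW, hWV⟩ := hinv V hV
  have hx1 : PosInf R (x + 1) := fun r hr => lt_trans (hx r hr) (by linarith)
  have hx1V : comp (x + 1) V = V + 1 := by
    rw [comp_add x 1 V hV, comp_id_left V hV, comp_const 1 (Subfield.one_mem R) V hV]
  set g := comp U W with hg
  have hgP : PosInf R g := comp_posinf U W hU hW
  have hgV : comp g V = U := by
    rw [hg, comp_assoc U W V hW hV, hWV, comp_id_right]
  have key : comp (comp g (x+1)) V = comp (comp (x+1) g) V := by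
    rw [comp_assoc g (x+1) V hx1 hV, hx1V, ← hVabel,
      ← comp_assoc g V h hV hh, hgV, hUabel,
      comp_assoc (x+1) g V hgP hV, hgV, comp_add x 1 U hU, comp_id_left U hU,
      comp_const 1 (Subfield.one_mem R) U hU]
  have cancel : ∀ A B : T, comp A V = comp B V → A = B := by
    intro A B hAB
    have := congrArg (fun z => comp z W) hAB
    simpa [comp_assoc _ V W hV hW, hVW, comp_id_right] using this
  have hcomm : comp g (x + 1) = comp (x + 1) g := cancel _ _ key
  obtain ⟨r, hr, hgr⟩ := hC g hgP hcomm
  have : U = V + r := by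
    rw [← hgV, hgr, comp_add x r V hV, comp_id_left V hV, comp_const r hr V hV]
  exact ⟨-r, Subfield.neg_mem R hr, by linarith⟩
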